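/- As α → 0⁺, (Φ⁻¹(α))² = -2 ln α - ln(-4π ln α) + o(1), where Φ⁻¹ is the inverse of the standard normal CDF. -/

import Mathlib

open Real Set Filter Topology MeasureTheory

noncomputable def phi (y : ℝ) : ℝ := (Real.sqrt (2 * Real.pi))⁻¹ * Real.exp (-y ^ 2 / 2)

noncomputable def Phi (x : ℝ) : ℝ := ∫ y in Set.Iic x, phi y

noncomputable def PhiInv (a : ℝ) : ℝ := Function.invFun Phi a

lemma phi_eq (y : ℝ) : phi y = (Real.sqrt (2 * Real.pi))⁻¹ * Real.exp (-(1/2) * y ^ 2) := by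
  unfold phi; ring_nf

lemma phi_pos (y : ℝ) : 0 < phi y := by
  have : (0:ℝ) < Real.sqrt (2 * Real.pi) := Real.sqrt_pos.2 (by positivity)
  exact mul_pos (inv_pos.2 this) (Real.exp_pos _)

lemma phi_cont : Continuous phi := by
  unfold phi; fun_prop

lemma phi_integrable : Integrable phi := by
  have h := (integrable_exp_neg_mul_sq (by norm_num : (0:ℝ) < 1/2)).const_mul
    (Real.sqrt (2 * Real.pi))⁻¹
  refine h.congr ?_
  filter_upwards with y
  rw [phi_eq]

lemma integral_phi : ∫ y, phi y = 1 := by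
  have h : ∫ y : ℝ, Real.exp (-(1/2) * y ^ 2) = Real.sqrt (Real.pi / (1/2)) :=
    integral_gaussian (1/2)
  have h2 : ∫ y, phi y = (Real.sqrt (2 * Real.pi))⁻¹ * ∫ y : ℝ, Real.exp (-(1/2) * y ^ 2) := by
    rw [← integral_const_mul]
    congr 1 with y; rw [phi_eq]
  rw [h2, h]
  have : Real.pi / (1/2) = 2 * Real.pi := by ring
  rw [this, inv_mul_cancel₀ (ne_of_gt (Real.sqrt_pos.2 (by positivity)))]

lemma Phi_sub_Phi {a b : ℝ} : Phi b - Phi a = ∫ y in a..b, phi y :=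
  intervalIntegral.integral_Iic_sub_Iic phi_integrable.integrableOn phi_integrable.integrableOn

lemma Phi_strictMono : StrictMono Phi := by
  intro a b hab
  have h : Phi b - Phi a = ∫ y in a..b, phi y := Phi_sub_Phi
  have hpos : 0 < ∫ y in a..b, phi y :=
    intervalIntegral.intervalIntegral_pos_of_pos_on
      phi_integrable.intervalIntegrable (fun x _ => phi_pos x) hab
  linarith

lemma Phi_continuous : Continuous Phi := by
  have h := phi_integrable.continuous_primitive 0
  have : ∀ x, Phi x = Phi 0 + ∫ y in (0:ℝ)..x, phi y := by
    intro x
    have := @Phi_sub_Phi 0 x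
    linarith
  simpa [← this] using (continuous_const.add h).congr fun x => (this x).symm

lemma Phi_eq_Ioi (x : ℝ) : Phi x = ∫ y in Ioi (-x), phi y := by
  have h1 : Phi x = ∫ y in Iic x, phi (-y) := by
    rw [Phi]; congr 1 with y; unfold phi; ring_nf
  rw [h1, integral_comp_neg_Iic]

lemma Phi_add_Phi_neg (x : ℝ) : Phi x + ∫ y in Ioi x, phi y = 1 := by
  rw [Phi, intervalIntegral.integral_Iic_add_Ioi phi_integrable.integrableOn
    phi_integrable.integrableOn, integral_phi]

lemma hasDerivAt_phi (y : ℝ) : HasDerivAt phi (-(y * phi y)) y := by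
  have h1 : HasDerivAt (fun x : ℝ => -x ^ 2 / 2) (-y) y := by
    have := ((hasDerivAt_pow 2 y).neg).div_const 2
    simpa using this.congr_deriv (by ring)
  have h2 := (h1.exp).const_mul (Real.sqrt (2 * Real.pi))⁻¹
  refine h2.congr_deriv ?_
  unfold phi; ring

lemma phi_tendsto_zero : Tendsto phi atTop (𝓝 0) := by
  have h1 : Tendsto (fun y : ℝ => -y ^ 2 / 2) atTop atBot := by
    apply Filter.Tendsto.atBot_div_const (by norm_num)
    exact tendsto_neg_atBot_iff.2 (tendsto_pow_atTop (by norm_num))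
  have h2 : Tendsto (fun y : ℝ => Real.exp (-y ^ 2 / 2)) atTop (𝓝 0) :=
    Real.tendsto_exp_atBot.comp h1
  have := h2.const_mul (Real.sqrt (2 * Real.pi))⁻¹
  rw [mul_zero] at this
  exact this

lemma integrable_mul_phi : Integrable (fun y => y * phi y) := by
  have h : Integrable (fun y : ℝ => y * ((Real.sqrt (2 * Real.pi))⁻¹ *
      Real.exp (-(1/2) * y ^ 2))) := by
    exact ((integrable_mul_exp_neg_mul_sq (by norm_num : (0:ℝ) < 1/2)).mul_const
      (Real.sqrt (2 * Real.pi))⁻¹).congr (by filter_upwards with y; ring)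
  exact h.congr (by filter_upwards with y; rw [phi_eq])

lemma integral_mul_phi (z : ℝ) : ∫ y in Ioi z, y * phi y = phi z := by
  have := integral_Ioi_of_hasDerivAt_of_tendsto'
    (f := fun y => -phi y) (f' := fun y => y * phi y) (a := z)
    (fun x _ => (hasDerivAt_phi x).neg.congr_deriv (neg_neg _))
    ?_ (by simpa using phi_tendsto_zero.neg)
  · simpa using this
  · exact integrable_mul_phi.integrableOn

noncomputable def mills (y : ℝ) : ℝ := phi y * (y / (1 + y ^ 2))

lemma hasDerivAt_mills (y : ℝ) :
    HasDerivAt mills (phi y * (2 / (1 + y ^ 2) ^ 2 - 1)) y := by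
  have hy : (1 : ℝ) + y ^ 2 ≠ 0 := by positivity
  have h1 : HasDerivAt (fun x : ℝ => x / (1 + x ^ 2)) ((1 - y ^ 2) / (1 + y ^ 2) ^ 2) y := by
    have hd : HasDerivAt (fun x : ℝ => 1 + x ^ 2) (2 * y) y := by
      simpa using (hasDerivAt_pow 2 y).const_add 1
    have := (hasDerivAt_id y).div hd hy
    refine this.congr_deriv ?_
    field_simp
    simp only [id_eq]
    ring
  have := (hasDerivAt_phi y).mul h1
  refine this.congr_deriv ?_
  field_simp
  ring

lemma mills_tendsto_zero : Tendsto mills atTop (𝓝 0) := by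
  refine tendsto_of_tendsto_of_tendsto_of_le_of_le' tendsto_const_nhds phi_tendsto_zero
    ?_ ?_
  · filter_upwards [eventually_ge_atTop (0:ℝ)] with y hy
    have : (0:ℝ) < 1 + y ^ 2 := by positivity
    exact mul_nonneg (phi_pos y).le (div_nonneg hy this.le)
  · filter_upwards [eventually_ge_atTop (0:ℝ)] with y hy
    have h1 : y / (1 + y ^ 2) ≤ 1 := by
      rw [div_le_one (by positivity)]
      nlinarith
    calc mills y ≤ phi y * 1 := by
          exact mul_le_mul_of_nonneg_left h1 (phi_pos y).le
      _ = phi y := mul_one _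

lemma cont_millsDeriv : Continuous (fun y : ℝ => phi y * (2 / (1 + y ^ 2) ^ 2 - 1)) := by
  refine phi_cont.mul (Continuous.sub ?_ continuous_const)
  exact continuous_const.div (by fun_prop) (fun y => by positivity)

lemma integrable_millsDeriv :
    Integrable (fun y : ℝ => phi y * (2 / (1 + y ^ 2) ^ 2 - 1)) := by
  refine Integrable.mono (phi_integrable.const_mul 3) cont_millsDeriv.aestronglyMeasurable ?_
  filter_upwards with y
  have h1 : (0:ℝ) < 1 + y ^ 2 := by positivity
  have h2 : (0:ℝ) < 2 / (1 + y ^ 2) ^ 2 := by positivity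
  have h3 : 2 / (1 + y ^ 2) ^ 2 ≤ 2 := by
    rw [div_le_iff₀ (by positivity)]
    nlinarith
  have hp := phi_pos y
  rw [Real.norm_eq_abs, Real.norm_eq_abs, abs_mul, abs_of_pos hp]
  have : |2 / (1 + y ^ 2) ^ 2 - 1| ≤ 3 := by
    rw [abs_le]; constructor <;> nlinarith
  calc phi y * |2 / (1 + y ^ 2) ^ 2 - 1| ≤ phi y * 3 := by
        exact mul_le_mul_of_nonneg_left this hp.le
    _ ≤ |3 * phi y| := by rw [abs_of_pos (by positivity)]; linarith

lemma integral_millsDeriv (z : ℝ) :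
    ∫ y in Ioi z, phi y * (1 - 2 / (1 + y ^ 2) ^ 2) = mills z := by
  have := integral_Ioi_of_hasDerivAt_of_tendsto'
    (f := fun y => -mills y) (f' := fun y => phi y * (1 - 2 / (1 + y ^ 2) ^ 2)) (a := z)
    (fun x _ => by
      have := (hasDerivAt_mills x).neg
      exact this.congr_deriv (by ring))
    ?_ (by simpa using mills_tendsto_zero.neg)
  · simpa using this
  · exact (integrable_millsDeriv.neg.congr (by filter_upwards with y; simp; ring)).integrableOn

lemma mills_lower {z : ℝ} : mills z ≤ ∫ y in Ioi z, phi y := by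
  rw [← integral_millsDeriv z]
  refine setIntegral_mono_on
    (integrable_millsDeriv.neg.congr (by filter_upwards with y; simp; ring)).integrableOn
    phi_integrable.integrableOn measurableSet_Ioi ?_
  intro y _
  have h2 : (0:ℝ) < 2 / (1 + y ^ 2) ^ 2 := by positivity
  nlinarith [phi_pos y]

lemma mills_upper {z : ℝ} (hz : 0 < z) : (∫ y in Ioi z, phi y) ≤ phi z / z := by
  have h1 : (∫ y in Ioi z, phi y) ≤ ∫ y in Ioi z, y * phi y / z := by
    refine setIntegral_mono_on phi_integrable.integrableOn
      ((integrable_mul_phi.div_const z).congr (by filter_upwards with y; ring)).integrableOn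
      measurableSet_Ioi ?_
    intro y hy
    rw [mem_Ioi] at hy
    rw [le_div_iff₀ hz]
    nlinarith [phi_pos y]
  have h2 : (∫ y in Ioi z, y * phi y / z) = phi z / z := by
    rw [integral_div, integral_mul_phi]
  linarith

noncomputable def T (z : ℝ) : ℝ := ∫ y in Ioi z, phi y

lemma tail_pos (x : ℝ) : 0 < T x := by
  have h1 : (0:ℝ) < ∫ y in x..(x+1), phi y :=
    intervalIntegral.intervalIntegral_pos_of_pos_on phi_integrable.intervalIntegrable
      (fun t _ => phi_pos t) (by linarith)
  have h2 : (∫ y in Ioc x (x+1), phi y) ≤ ∫ y in Ioi x, phi y := by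
    refine setIntegral_mono_set phi_integrable.integrableOn ?_ ?_
    · filter_upwards with y; exact (phi_pos y).le
    · exact HasSubset.Subset.eventuallyLE Ioc_subset_Ioi_self
  rw [intervalIntegral.integral_of_le (by linarith : x ≤ x + 1)] at h1
  unfold T; linarith

lemma Phi_eq_T (x : ℝ) : Phi x = T (-x) := Phi_eq_Ioi x

lemma Phi_lt_one (x : ℝ) : Phi x < 1 := by
  have := Phi_add_Phi_neg x
  have := tail_pos x
  unfold T at this; linarith

lemma Phi_pos (x : ℝ) : 0 < Phi x := by
  rw [Phi_eq_T]; exact tail_pos _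

lemma phi_div_self_tendsto : Tendsto (fun z : ℝ => phi z / z) atTop (𝓝 0) := by
  have h := phi_tendsto_zero.mul tendsto_inv_atTop_zero
  rw [mul_zero] at h
  exact h.congr fun z => (div_eq_mul_inv _ _).symm

lemma T_tendsto_zero : Tendsto T atTop (𝓝 0) := by
  refine tendsto_of_tendsto_of_tendsto_of_le_of_le' tendsto_const_nhds phi_div_self_tendsto ?_ ?_
  · filter_upwards with z; exact (tail_pos z).le
  · filter_upwards [eventually_gt_atTop (0:ℝ)] with z hz
    exact mills_upper hz

lemma Phi_tendsto_atTop : Tendsto Phi atTop (𝓝 1) := by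
  have h : Tendsto (fun x => 1 - T x) atTop (𝓝 (1 - 0)) := tendsto_const_nhds.sub T_tendsto_zero
  rw [sub_zero] at h
  refine h.congr fun x => ?_
  have := Phi_add_Phi_neg x
  unfold T; linarith

lemma Phi_tendsto_atBot : Tendsto Phi atBot (𝓝 0) := by
  have h : Tendsto (fun x : ℝ => T (-x)) atBot (𝓝 0) := T_tendsto_zero.comp tendsto_neg_atBot_atTop
  exact h.congr fun x => (Phi_eq_T x).symm

lemma exists_Phi_eq {a : ℝ} (h : a ∈ Ioo (0:ℝ) 1) : ∃ x, Phi x = a := by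
  obtain ⟨lo, hlo⟩ := (Phi_tendsto_atBot.eventually (eventually_lt_nhds h.1)).exists
  obtain ⟨hi, hhi⟩ := (Phi_tendsto_atTop.eventually (eventually_gt_nhds h.2)).exists
  have hmem : a ∈ Icc (Phi lo) (Phi hi) := ⟨hlo.le, hhi.le⟩
  have := intermediate_value_uIcc (Phi_continuous.continuousOn (s := uIcc lo hi))
  have hsub : Icc (Phi lo) (Phi hi) ⊆ uIcc (Phi lo) (Phi hi) := Icc_subset_uIcc
  obtain ⟨x, _, hx⟩ := this (hsub hmem)
  exact ⟨x, hx⟩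

lemma Phi_PhiInv {a : ℝ} (h : a ∈ Ioo (0:ℝ) 1) : Phi (PhiInv a) = a :=
  Function.invFun_eq (exists_Phi_eq h)

lemma PhiInv_tendsto : Tendsto PhiInv (𝓝[>] (0:ℝ)) atBot := by
  rw [tendsto_atBot]
  intro b
  have hmem : Ioo (0:ℝ) (Phi b) ∈ 𝓝[>] (0:ℝ) := Ioo_mem_nhdsGT_of_mem ⟨le_refl _, Phi_pos b⟩
  filter_upwards [hmem] with a ha
  have ha1 : a ∈ Ioo (0:ℝ) 1 := ⟨ha.1, ha.2.trans (Phi_lt_one b)⟩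
  have : Phi (PhiInv a) < Phi b := by rw [Phi_PhiInv ha1]; exact ha.2
  exact (Phi_strictMono.lt_iff_lt.mp this).le

noncomputable def ee (z : ℝ) : ℝ :=
  Real.log (T z) + z^2/2 + Real.log (Real.sqrt (2*Real.pi)) + Real.log z

noncomputable def uu (z : ℝ) : ℝ :=
  (Real.log (Real.sqrt (2*Real.pi)) + Real.log z - ee z) / (z^2/2)

lemma log_phi (z : ℝ) :
    Real.log (phi z) = -(Real.log (Real.sqrt (2*Real.pi))) - z^2/2 := by
  unfold phi
  rw [Real.log_mul (by positivity) (Real.exp_ne_zero _), Real.log_inv, Real.log_exp]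
  ring

lemma ee_nonpos {z : ℝ} (hz : 0 < z) : ee z ≤ 0 := by
  have h2 : Real.log (T z) ≤ Real.log (phi z / z) :=
    Real.log_le_log (tail_pos z) (mills_upper hz)
  rw [Real.log_div (ne_of_gt (phi_pos z)) (ne_of_gt hz), log_phi] at h2
  unfold ee; linarith

lemma ee_lower {z : ℝ} (hz : 0 < z) : Real.log (z^2/(1+z^2)) ≤ ee z := by
  have hz2 : (0:ℝ) < 1 + z^2 := by positivity
  have h1 : phi z * (z/(1+z^2)) ≤ T z := mills_lower
  have hpos : 0 < phi z * (z/(1+z^2)) := by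
    exact mul_pos (phi_pos z) (div_pos hz hz2)
  have h2 : Real.log (phi z * (z/(1+z^2))) ≤ Real.log (T z) := Real.log_le_log hpos h1
  rw [Real.log_mul (ne_of_gt (phi_pos z)) (by positivity),
    Real.log_div (ne_of_gt hz) (ne_of_gt hz2), log_phi] at h2
  rw [Real.log_div (by positivity) (ne_of_gt hz2), Real.log_pow]
  unfold ee
  push_cast
  linarith

lemma one_add_sq_atTop : Tendsto (fun z : ℝ => 1 + z^2) atTop atTop := by
  exact tendsto_atTop_add_const_left _ 1 (tendsto_pow_atTop (by norm_num))

lemma ee_tendsto : Tendsto ee atTop (𝓝 0) := by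
  have hg : Tendsto (fun z : ℝ => Real.log (z^2/(1+z^2))) atTop (𝓝 0) := by
    have h1 : Tendsto (fun z : ℝ => z^2/(1+z^2)) atTop (𝓝 1) := by
      have h2 : Tendsto (fun z : ℝ => 1 - (1+z^2)⁻¹) atTop (𝓝 (1 - 0)) :=
        tendsto_const_nhds.sub (tendsto_inv_atTop_zero.comp one_add_sq_atTop)
      rw [sub_zero] at h2
      refine h2.congr fun z => ?_
      have : (1:ℝ) + z^2 ≠ 0 := by positivity
      field_simp
      ring
    have := ((Real.continuousAt_log one_ne_zero).tendsto.comp h1)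
    rwa [Real.log_one] at this
  refine tendsto_of_tendsto_of_tendsto_of_le_of_le' hg tendsto_const_nhds ?_ ?_
  · filter_upwards [eventually_gt_atTop (0:ℝ)] with z hz; exact ee_lower hz
  · filter_upwards [eventually_gt_atTop (0:ℝ)] with z hz; exact ee_nonpos hz

lemma half_sq_atTop : Tendsto (fun z : ℝ => z^2/2) atTop atTop :=
  (tendsto_pow_atTop (by norm_num)).atTop_div_const (by norm_num)

lemma uu_tendsto : Tendsto uu atTop (𝓝 0) := by
  have hinv : Tendsto (fun z : ℝ => (z^2/2)⁻¹) atTop (𝓝 0) :=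
    tendsto_inv_atTop_zero.comp half_sq_atTop
  have h1 : Tendsto (fun z : ℝ => Real.log (Real.sqrt (2*Real.pi)) * (z^2/2)⁻¹) atTop (𝓝 0) := by
    have := hinv.const_mul (Real.log (Real.sqrt (2*Real.pi)))
    rwa [mul_zero] at this
  have h2 : Tendsto (fun z : ℝ => Real.log z / (z^2/2)) atTop (𝓝 0) := by
    have ha : Tendsto (fun z : ℝ => Real.log z / z) atTop (𝓝 0) :=
      Real.isLittleO_log_id_atTop.tendsto_div_nhds_zero
    have hb : Tendsto (fun z : ℝ => (2:ℝ)/z) atTop (𝓝 0) :=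
      tendsto_const_nhds.div_atTop tendsto_id
    have := ha.mul hb
    rw [mul_zero] at this
    refine this.congr fun z => ?_
    ring
  have h3 : Tendsto (fun z : ℝ => ee z * (z^2/2)⁻¹) atTop (𝓝 0) := by
    have := ee_tendsto.mul hinv
    rwa [zero_mul] at this
  have h := (h1.add h2).sub h3
  rw [add_zero, sub_zero] at h
  refine h.congr fun z => ?_
  unfold uu
  ring

lemma F_tendsto : Tendsto
    (fun z => z^2 + 2*Real.log (T z) + Real.log (-4*Real.pi*Real.log (T z)))
    atTop (𝓝 0) := by
  have hlim : Tendsto (fun z => 2*ee z + Real.log (1 + uu z)) atTop (𝓝 0) := by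
    have h1 : Tendsto (fun z => 2*ee z) atTop (𝓝 0) := by
      have := ee_tendsto.const_mul 2; rwa [mul_zero] at this
    have h2 : Tendsto (fun z => Real.log (1 + uu z)) atTop (𝓝 0) := by
      have hu : Tendsto (fun z => 1 + uu z) atTop (𝓝 1) := by
        have := uu_tendsto.const_add 1; rwa [add_zero] at this
      have := (Real.continuousAt_log one_ne_zero).tendsto.comp hu
      rwa [Real.log_one] at this
    have := h1.add h2
    rwa [add_zero] at this
  refine Tendsto.congr' ?_ hlim
  filter_upwards [eventually_ge_atTop (1:ℝ)] with z hz
  have hz0 : (0:ℝ) < z := by linarith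
  have hq : (0:ℝ) < z^2/2 := by positivity
  have hc : (0:ℝ) ≤ Real.log (Real.sqrt (2*Real.pi)) := by
    refine Real.log_nonneg ?_
    rw [show (1:ℝ) = Real.sqrt 1 by simp]
    exact Real.sqrt_le_sqrt (by nlinarith [Real.pi_gt_three])
  have hlz : (0:ℝ) ≤ Real.log z := Real.log_nonneg hz
  have hE : ee z ≤ 0 := ee_nonpos hz0
  have hinner : 0 < z^2/2 + Real.log (Real.sqrt (2*Real.pi)) + Real.log z - ee z := by
    linarith
  have hlogT : Real.log (T z) =
      ee z - z^2/2 - Real.log (Real.sqrt (2*Real.pi)) - Real.log z := by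
    unfold ee; ring
  have huu : 1 + uu z =
      (z^2/2 + Real.log (Real.sqrt (2*Real.pi)) + Real.log z - ee z) / (z^2/2) := by
    unfold uu; field_simp; ring
  have huupos : 0 < 1 + uu z := by rw [huu]; positivity
  have h4 : -4*Real.pi*Real.log (T z) =
      4*Real.pi*(z^2/2 + Real.log (Real.sqrt (2*Real.pi)) + Real.log z - ee z) := by
    rw [hlogT]; ring
  have hfact : z^2/2 + Real.log (Real.sqrt (2*Real.pi)) + Real.log z - ee z =
      (z^2/2) * (1 + uu z) := by
    rw [huu]; field_simp
  have hpi : (0:ℝ) < Real.pi := Real.pi_pos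
  rw [h4, hfact, Real.log_mul (by positivity) (by positivity),
    Real.log_mul hq.ne' huupos.ne',
    Real.log_div (by positivity : (z:ℝ)^2 ≠ 0) (by norm_num : (2:ℝ) ≠ 0),
    Real.log_pow,
    show (4:ℝ)*Real.pi = 2*(2*Real.pi) by ring,
    Real.log_mul (by norm_num) (by positivity),
    hlogT, Real.log_sqrt (by positivity)]
  push_cast
  ring

theorem quantile_asymptotics :
    Filter.Tendsto
      (fun α : ℝ => (PhiInv α) ^ 2 - (-2 * Real.log α - Real.log (-4 * Real.pi * Real.log α)))
      (𝓝[>] 0) (𝓝 0) := by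
  have hz : Tendsto (fun α : ℝ => -PhiInv α) (𝓝[>] (0:ℝ)) atTop :=
    tendsto_neg_atBot_atTop.comp PhiInv_tendsto
  have hF := F_tendsto.comp hz
  refine Tendsto.congr' ?_ hF
  have hmem : Ioo (0:ℝ) 1 ∈ 𝓝[>] (0:ℝ) := Ioo_mem_nhdsGT_of_mem ⟨le_refl _, one_pos⟩
  filter_upwards [hmem] with a ha
  have hT : T (-PhiInv a) = a := by
    rw [← Phi_eq_T]; exact Phi_PhiInv ha
  simp only [Function.comp_apply]
  rw [hT]
  ring
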